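/- Let λ ∈ [0,1], let a, b ≥ 0 with a + b = λ, and define A(t) = max{1 − t, t, (1−a)(1−t) + (1−b)t} for t ∈ [0,1]. Then ∫₀¹ dt/(A(t)+1)² = (1/3)·(1 − 4(1−λ)²/((4−λ)² − 9(a−b)²)). Consequently, the Spearman coefficient ρ = 12∫₀¹ dt/(A(t)+1)² − 3 of the copula min{u, v, u^(1-a)v^(1-b)} equals 1 − 16(1−λ)²/((4−λ)² − 9(a−b)²). -/

import Mathlib

open MeasureTheory Filter Set Real

noncomputable section

lemma key (x y c d : ℝ) (hx : x ≤ y) (h : ∀ t ∈ Icc x y, 0 < c + d * t) :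
    ∫ t in x..y, 1 / (c + d * t) ^ 2 = (y - x) / ((c + d * x) * (c + d * y)) := by
  have hxmem : x ∈ Icc x y := ⟨le_refl x, hx⟩
  have hymem : y ∈ Icc x y := ⟨hx, le_refl y⟩
  have hcx := h x hxmem
  have hcy := h y hymem
  have huIcc : uIcc x y = Icc x y := uIcc_of_le hx
  rcases eq_or_ne d 0 with hd | hd
  · subst hd
    simp only [zero_mul, add_zero] at *
    rw [intervalIntegral.integral_const]
    rw [smul_eq_mul]
    field_simp
  · have hderiv : ∀ t ∈ uIcc x y,
        HasDerivAt (fun s => -1 / (d * (c + d * s))) (1 / (c + d * t) ^ 2) t := by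
      intro t ht
      rw [huIcc] at ht
      have hct := (h t ht).ne'
      have h1 : HasDerivAt (fun s : ℝ => c + d * s) d t := by
        simpa using ((hasDerivAt_id t).const_mul d).const_add c
      have h2 : HasDerivAt (fun s : ℝ => d * (c + d * s)) (d * d) t := h1.const_mul d
      have h3 : HasDerivAt (fun s : ℝ => (d * (c + d * s))⁻¹)
          (-(d * d) / (d * (c + d * t)) ^ 2) t := h2.inv (mul_ne_zero hd hct)
      have h4 := h3.const_mul (-1 : ℝ)
      have heq : -1 * (-(d * d) / (d * (c + d * t)) ^ 2) = 1 / (c + d * t) ^ 2 := by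
        field_simp
      rw [heq] at h4
      have hfeq : (fun s : ℝ => -1 / (d * (c + d * s))) = fun s => -1 * (d * (c + d * s))⁻¹ := by
        funext s; rw [div_eq_mul_inv]
      rw [hfeq]
      exact h4
    have hcont : ContinuousOn (fun t => 1 / (c + d * t) ^ 2) (uIcc x y) := by
      rw [huIcc]
      apply ContinuousOn.div continuousOn_const
      · fun_prop
      · intro t ht
        exact pow_ne_zero 2 (h t ht).ne'
    rw [intervalIntegral.integral_eq_sub_of_hasDerivAt hderiv (hcont.intervalIntegrable)]
    field_simp
    ring

set_option maxHeartbeats 1000000 in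
theorem stmt_5 (lam a b : ℝ) (hlam : lam ∈ Set.Icc (0:ℝ) 1)
    (ha : 0 ≤ a) (hb : 0 ≤ b) (hab : a + b = lam)
    (A : ℝ → ℝ)
    (hA : ∀ t ∈ Set.Icc (0:ℝ) 1, A t = max (1 - t) (max t ((1 - a) * (1 - t) + (1 - b) * t))) :
    (∫ t in (0:ℝ)..1, 1 / (A t + 1) ^ 2)
        = (1 / 3) * (1 - 4 * (1 - lam) ^ 2 / ((4 - lam) ^ 2 - 9 * (a - b) ^ 2)) ∧
    12 * (∫ t in (0:ℝ)..1, 1 / (A t + 1) ^ 2) - 3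
        = 1 - 16 * (1 - lam) ^ 2 / ((4 - lam) ^ 2 - 9 * (a - b) ^ 2) := by
  subst hab
  obtain ⟨hl0, hl1⟩ := hlam
  have ha1 : a ≤ 1 := by linarith
  have hb1 : b ≤ 1 := by linarith
  set f : ℝ → ℝ := fun t => 1 / (max (1 - t) (max t ((1 - a) * (1 - t) + (1 - b) * t)) + 1) ^ 2
    with hf
  have hMpos : ∀ t : ℝ, 0 < max (1 - t) (max t ((1 - a) * (1 - t) + (1 - b) * t)) + 1 := by
    intro t
    rcases le_or_gt t (1/2) with h | h
    · have h1 : 1 - t ≤ max (1 - t) (max t ((1 - a) * (1 - t) + (1 - b) * t)) := le_max_left _ _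
      linarith
    · have h1 : t ≤ max (1 - t) (max t ((1 - a) * (1 - t) + (1 - b) * t)) :=
        le_trans (le_max_left _ _) (le_max_right _ _)
      linarith
  have hcontf : Continuous f := by
    apply Continuous.div continuous_const
    · fun_prop
    · intro t
      exact pow_ne_zero 2 (hMpos t).ne'
  have hint : ∀ x y : ℝ, IntervalIntegrable f volume x y :=
    fun x y => hcontf.intervalIntegrable x y
  have hcongr : (∫ t in (0:ℝ)..1, 1 / (A t + 1) ^ 2) = ∫ t in (0:ℝ)..1, f t := by
    apply intervalIntegral.integral_congr
    intro t ht
    rw [uIcc_of_le (by norm_num : (0:ℝ) ≤ 1)] at ht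
    simp only [hf]
    rw [hA t ht]
  have hval : (∫ t in (0:ℝ)..1, f t)
      = (1 / 3) * (1 - 4 * (1 - (a+b)) ^ 2 / ((4 - (a+b)) ^ 2 - 9 * (a - b) ^ 2)) := by
    rcases eq_or_lt_of_le hl1 with hl | hl
    · -- lam = 1 case : a + b = 1
      have hab1 : a + b = 1 := hl
      have hsplit : (∫ t in (0:ℝ)..1, f t)
          = (∫ t in (0:ℝ)..(1/2:ℝ), f t) + ∫ t in (1/2:ℝ)..1, f t := by
        rw [intervalIntegral.integral_add_adjacent_intervals (hint 0 (1/2)) (hint (1/2) 1)]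
      have p1 : (∫ t in (0:ℝ)..(1/2:ℝ), f t) = ∫ t in (0:ℝ)..(1/2:ℝ), 1 / (2 + (-1) * t) ^ 2 := by
        apply intervalIntegral.integral_congr
        intro t ht
        rw [uIcc_of_le (by norm_num : (0:ℝ) ≤ 1/2)] at ht
        obtain ⟨ht0, ht2⟩ := ht
        simp only [hf]
        have h1 : max t ((1 - a) * (1 - t) + (1 - b) * t) ≤ 1 - t := by
          apply max_le (by linarith)
          nlinarith
        rw [max_eq_left h1]
        ring_nf
      have p2 : (∫ t in (1/2:ℝ)..1, f t) = ∫ t in (1/2:ℝ)..1, 1 / (1 + 1 * t) ^ 2 := by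
        apply intervalIntegral.integral_congr
        intro t ht
        rw [uIcc_of_le (by norm_num : (1/2:ℝ) ≤ 1)] at ht
        obtain ⟨ht0, ht2⟩ := ht
        simp only [hf]
        have h1 : (1 - a) * (1 - t) + (1 - b) * t ≤ t := by nlinarith
        rw [max_eq_left h1, max_eq_right (by linarith : 1 - t ≤ t)]
        ring_nf
      rw [hsplit, p1, p2,
        key 0 (1/2) 2 (-1) (by norm_num) (by intro t ht; obtain ⟨h1, h2⟩ := ht; linarith),
        key (1/2) 1 1 1 (by norm_num) (by intro t ht; obtain ⟨h1, h2⟩ := ht; linarith),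
        hab1]
      norm_num
    · -- lam < 1 case
      have hd1 : (0:ℝ) < 1 + a - b := by linarith
      have hd2 : (0:ℝ) < 1 + b - a := by linarith
      set t1 : ℝ := a / (1 + a - b) with ht1def
      set t2 : ℝ := (1 - a) / (1 + b - a) with ht2def
      have ht1mul : t1 * (1 + a - b) = a := div_mul_cancel₀ a hd1.ne'
      have ht2mul : t2 * (1 + b - a) = 1 - a := div_mul_cancel₀ (1 - a) hd2.ne'
      have ht10 : 0 ≤ t1 := div_nonneg ha hd1.le
      have ht112 : t1 ≤ 1/2 := by
        rw [ht1def, div_le_iff₀ hd1]; linarith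
      have ht212 : 1/2 ≤ t2 := by
        rw [ht2def, le_div_iff₀ hd2]; linarith
      have ht21 : t2 ≤ 1 := by
        rw [ht2def, div_le_one hd2]; linarith
      have ht12 : t1 ≤ t2 := by linarith
      have hsplit : (∫ t in (0:ℝ)..1, f t)
          = (∫ t in (0:ℝ)..t1, f t) + ((∫ t in t1..t2, f t) + ∫ t in t2..(1:ℝ), f t) := by
        rw [intervalIntegral.integral_add_adjacent_intervals (hint t1 t2) (hint t2 1),
          intervalIntegral.integral_add_adjacent_intervals (hint 0 t1) (hint t1 1)]
      have p1 : (∫ t in (0:ℝ)..t1, f t) = ∫ t in (0:ℝ)..t1, 1 / (2 + (-1) * t) ^ 2 := by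
        apply intervalIntegral.integral_congr
        intro t ht
        rw [uIcc_of_le ht10] at ht
        obtain ⟨ht0, htt⟩ := ht
        simp only [hf]
        have h1 : max t ((1 - a) * (1 - t) + (1 - b) * t) ≤ 1 - t := by
          apply max_le (by linarith)
          nlinarith [mul_le_mul_of_nonneg_left htt hd1.le]
        rw [max_eq_left h1]
        ring_nf
      have p2 : (∫ t in t1..t2, f t) = ∫ t in t1..t2, 1 / ((2 - a) + (a - b) * t) ^ 2 := by
        apply intervalIntegral.integral_congr
        intro t ht
        rw [uIcc_of_le ht12] at ht
        obtain ⟨ht0, htt⟩ := ht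
        simp only [hf]
        have h1 : t ≤ (1 - a) * (1 - t) + (1 - b) * t := by
          nlinarith [mul_le_mul_of_nonneg_left htt hd2.le]
        have h2 : 1 - t ≤ (1 - a) * (1 - t) + (1 - b) * t := by
          nlinarith [mul_le_mul_of_nonneg_left ht0 hd1.le]
        rw [max_eq_right h1, max_eq_right h2]
        ring_nf
      have p3 : (∫ t in t2..(1:ℝ), f t) = ∫ t in t2..(1:ℝ), 1 / (1 + 1 * t) ^ 2 := by
        apply intervalIntegral.integral_congr
        intro t ht
        rw [uIcc_of_le ht21] at ht
        obtain ⟨ht0, htt⟩ := ht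
        simp only [hf]
        have h1 : (1 - a) * (1 - t) + (1 - b) * t ≤ t := by
          nlinarith [mul_le_mul_of_nonneg_left ht0 hd2.le]
        rw [max_eq_left h1, max_eq_right (by linarith : 1 - t ≤ t)]
        ring_nf
      have hk1 := key 0 t1 2 (-1) ht10
        (by intro t ht; obtain ⟨h1, h2⟩ := ht; nlinarith)
      have hk2 := key t1 t2 (2 - a) (a - b) ht12
        (by intro t ht; obtain ⟨h1, h2⟩ := ht; nlinarith)
      have hk3 := key t2 1 1 1 ht21
        (by intro t ht; obtain ⟨h1, h2⟩ := ht; nlinarith)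
      rw [hsplit, p1, p2, p3, hk1, hk2, hk3]
      -- algebraic identities
      have e1 : (2:ℝ) - a + (a - b) * t1 = 2 - t1 := by nlinarith [ht1mul]
      have e2 : (2:ℝ) - a + (a - b) * t2 = 1 + t2 := by nlinarith [ht2mul]
      have h2t1 : 2 - t1 = (2 + a - 2*b) / (1 + a - b) := by
        rw [ht1def]; field_simp; ring
      have h1t2 : 1 + t2 = (2 + b - 2*a) / (1 + b - a) := by
        rw [ht2def]; field_simp; ring
      have ht2t1 : t2 - t1 = (1 - a - b) / ((1 + a - b) * (1 + b - a)) := by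
        rw [ht1def, ht2def]; field_simp; ring
      have h1mt2 : 1 - t2 = b / (1 + b - a) := by
        rw [ht2def]; field_simp; ring
      have hc1 : (0:ℝ) < 2 + a - 2*b := by linarith
      have hc2 : (0:ℝ) < 2 + b - 2*a := by linarith
      have hD : (0:ℝ) < (4 - (a + b)) ^ 2 - 9 * (a - b) ^ 2 := by nlinarith
      have e1' : (2:ℝ) - a + (a - b) * t1 = (2 + a - 2*b) / (1 + a - b) := by
        rw [e1, h2t1]
      have e2' : (2:ℝ) - a + (a - b) * t2 = (2 + b - 2*a) / (1 + b - a) := by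
        rw [e2, h1t2]
      have g1 : t1 - 0 = a / (1 + a - b) := by rw [ht1def]; ring
      have g2 : (2:ℝ) + -1 * 0 = 2 := by norm_num
      have g3 : 2 + -1 * t1 = (2 + a - 2*b) / (1 + a - b) := by
        rw [show (2:ℝ) + -1 * t1 = 2 - t1 by ring, h2t1]
      have g6 : 1 + 1 * t2 = (2 + b - 2*a) / (1 + b - a) := by
        rw [show (1:ℝ) + 1 * t2 = 1 + t2 by ring, h1t2]
      have g7 : (1:ℝ) + 1 * 1 = 2 := by norm_num
      rw [g1, g2, g3, e1', e2', ht2t1, h1mt2, g6, g7]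
      rw [div_add_div _ _ (by positivity) (by positivity), div_add_div _ _ (by positivity) (by positivity)]
      rw [div_eq_iff (by positivity)]
      field_simp
      ring
  refine ⟨by rw [hcongr, hval], ?_⟩
  rw [hcongr, hval]
  ring
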